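/- arXiv:1707.03603 — 3 statements merged into one kernel-verified Lean document; each statement's English description precedes it below -/
import Mathlib

section
/- Let $N \in \mathbb{N}$ with $N \geq 1$, let $y \in \mathbb{R}^N$ with $|y| > 1$, and define $p : B \to \mathbb{R}$ on the open unit ball $B \subset \mathbb{R}^N$ by $p(x) = |x - y|^{-N} \left(1 + \frac{1 - |x|^2}{|y|^2 - 1}\right)$. Then $p$ is harmonic in $B$, i.e., $\Delta p(x) = 0$ for all $x \in B$. -/
open Real Metric Filter Topology

lemma second_deriv_model (a b K L d e α : ℝ) (ha : 0 < a) :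
    iteratedDeriv 2 (fun t : ℝ => (a + b*t + t^2) ^ α * (K + L*(d + e*t + t^2))) 0 =
      (α*(α-1) * a ^ (α-2) * b^2 + 2*α * a ^ (α-1)) * (K + L*d)
      + 2 * (α * a ^ (α-1) * b) * (L*e) + a ^ α * (2*L) := by
  have hs : ∀ t : ℝ, HasDerivAt (fun t : ℝ => a + b*t + t^2) (b + 2*t) t := by
    intro t
    have h1 : HasDerivAt (fun t : ℝ => t^2) (2*t) t := by simpa using hasDerivAt_pow 2 t
    have h2 : HasDerivAt (fun t : ℝ => b * t) b t := by simpa using (hasDerivAt_id t).const_mul b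
    exact (h2.const_add a).add h1
  have hF : ∀ t : ℝ, HasDerivAt (fun t : ℝ => K + L*(d + e*t + t^2)) (L*(e + 2*t)) t := by
    intro t
    have h1 : HasDerivAt (fun t : ℝ => d + e*t + t^2) (e + 2*t) t := by
      have h2 : HasDerivAt (fun t : ℝ => t^2) (2*t) t := by simpa using hasDerivAt_pow 2 t
      have h3 : HasDerivAt (fun t : ℝ => e * t) e t := by simpa using (hasDerivAt_id t).const_mul e
      exact (h3.const_add d).add h2
    simpa using (h1.const_mul L).const_add K
  set g1 : ℝ → ℝ := fun t => ((b + 2*t) * α * (a + b*t + t^2) ^ (α-1)) * (K + L*(d + e*t + t^2))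
      + (a + b*t + t^2) ^ α * (L*(e + 2*t)) with hg1
  have hev : ∀ᶠ t in 𝓝 (0:ℝ), 0 < a + b*t + t^2 := by
    have hc : Continuous (fun t : ℝ => a + b*t + t^2) := by continuity
    have := (hc.tendsto 0).eventually (eventually_gt_nhds (by simpa using ha))
    simpa using this
  have hg : ∀ t : ℝ, 0 < a + b*t + t^2 →
      HasDerivAt (fun t : ℝ => (a + b*t + t^2) ^ α * (K + L*(d + e*t + t^2))) (g1 t) t := by
    intro t ht
    exact ((hs t).rpow_const (Or.inl ht.ne')).mul (hF t)
  have hde : deriv (fun t : ℝ => (a + b*t + t^2) ^ α * (K + L*(d + e*t + t^2))) =ᶠ[𝓝 (0:ℝ)] g1 :=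
    hev.mono fun t ht => (hg t ht).deriv
  rw [iteratedDeriv_succ, iteratedDeriv_one, hde.deriv_eq]
  have hD : HasDerivAt g1
      ( ((2:ℝ) * α * a ^ (α-1) + (b * α) * (b * (α-1) * a ^ ((α-1)-1))) * (K + L*d)
        + (b * α * a ^ (α-1)) * (L*e)
        + ((b * α * a ^ (α-1)) * (L*e) + a ^ α * (L*2)) ) 0 := by
    have hA1 : HasDerivAt (fun t : ℝ => (a + b*t + t^2) ^ (α-1))
        ((b + 2*0) * (α-1) * (a + b*0 + 0^2) ^ ((α-1)-1)) 0 :=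
      (hs 0).rpow_const (Or.inl (by simpa using ha.ne'))
    have hA : HasDerivAt (fun t : ℝ => (a + b*t + t^2) ^ α)
        ((b + 2*0) * α * (a + b*0 + 0^2) ^ (α-1)) 0 :=
      (hs 0).rpow_const (Or.inl (by simpa using ha.ne'))
    have hB : HasDerivAt (fun t : ℝ => (b + 2*t) * α * (a + b*t + t^2) ^ (α-1))
        (2 * α * (a + b*0 + 0^2) ^ (α-1)
          + (b + 2*0) * α * ((b + 2*0) * (α-1) * (a + b*0 + 0^2) ^ ((α-1)-1))) 0 := by
      have hb2 : HasDerivAt (fun t : ℝ => (b + 2*t) * α) (2 * α) 0 := by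
        have : HasDerivAt (fun t : ℝ => b + 2*t) 2 0 := by
          simpa using ((hasDerivAt_id (0:ℝ)).const_mul 2).const_add b
        simpa using this.mul_const α
      exact hb2.mul hA1
    have hT1 := hB.mul (hF 0)
    have hL2 : HasDerivAt (fun t : ℝ => L*(e + 2*t)) (L*2) 0 := by
      have : HasDerivAt (fun t : ℝ => e + 2*t) 2 0 := by
        simpa using ((hasDerivAt_id (0:ℝ)).const_mul 2).const_add e
      simpa using this.const_mul L
    have hT2' := hA.mul hL2
    have := hT1.add hT2'
    convert (show HasDerivAt g1 _ 0 from this) using 1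
    norm_num
  rw [hD.deriv]
  rw [show α - 1 - 1 = α - 2 from by ring]
  ring

lemma norm_line (N : ℕ) (v : EuclideanSpace ℝ (Fin N)) (i : Fin N) (t : ℝ) :
    ‖v + t • EuclideanSpace.single i (1:ℝ)‖^2 = ‖v‖^2 + (2 * v i) * t + t^2 := by
  rw [norm_add_sq_real, real_inner_smul_right, EuclideanSpace.inner_single_right, norm_smul]
  simp [sq_abs]
  ring

lemma rpow_helper (r : ℝ) (hr : 0 ≤ r) (N : ℕ) : (r^2) ^ (-(N:ℝ)/2) = (r^N)⁻¹ := by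
  rw [← Real.rpow_natCast r 2, ← Real.rpow_mul hr, ← Real.rpow_natCast r N, ← Real.rpow_neg hr]
  congr 1
  push_cast
  ring

lemma fun_eq (N : ℕ) (y : EuclideanSpace ℝ (Fin N)) (hy : 1 < ‖y‖)
    (x : EuclideanSpace ℝ (Fin N)) (hx : x ∈ ball (0 : EuclideanSpace ℝ (Fin N)) 1) (i : Fin N) :
    (fun t : ℝ => (‖(x + t • EuclideanSpace.single i (1:ℝ)) - y‖ ^ N)⁻¹ *
        (1 + (1 - ‖x + t • EuclideanSpace.single i (1:ℝ)‖ ^ 2) / (‖y‖ ^ 2 - 1)))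
      = fun t : ℝ => (‖x-y‖^2 + (2*((x-y) i))*t + t^2) ^ (-(N:ℝ)/2) *
        ((1 + 1/(‖y‖^2 - 1)) + (-(1/(‖y‖^2 - 1)))*(‖x‖^2 + (2*(x i))*t + t^2)) := by
  have hx1 : ‖x‖ < 1 := by simpa using hx
  have hc : ‖y‖^2 - 1 ≠ 0 := by nlinarith
  funext t
  have h1 : x + t • EuclideanSpace.single i (1:ℝ) - y = (x - y) + t • EuclideanSpace.single i (1:ℝ) := by
    abel
  rw [h1, ← rpow_helper _ (norm_nonneg _) N, norm_line, norm_line]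
  have h2 : ∀ q : ℝ, 1 + (1 - q)/(‖y‖^2-1) = (1 + 1/(‖y‖^2 - 1)) + (-(1/(‖y‖^2 - 1)))*q := by
    intro q; field_simp; ring
  rw [h2]


/-- The Laplacian of `f : ℝ^N → ℝ` at `x`, defined as the sum of second derivatives
along the coordinate directions. -/
noncomputable def laplacian {N : ℕ} (f : EuclideanSpace ℝ (Fin N) → ℝ)
    (x : EuclideanSpace ℝ (Fin N)) : ℝ :=
  ∑ i : Fin N, iteratedDeriv 2 (fun t : ℝ => f (x + t • EuclideanSpace.single i (1 : ℝ))) 0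

/-- The function `p(x) = |x-y|^{-N} (1 + (1-|x|²)/(|y|²-1))` is harmonic in the
open unit ball, for any fixed `y` with `|y| > 1`. -/
theorem p_is_harmonic (N : ℕ) (hN : 1 ≤ N) (y : EuclideanSpace ℝ (Fin N)) (hy : 1 < ‖y‖)
    (x : EuclideanSpace ℝ (Fin N)) (hx : x ∈ ball (0 : EuclideanSpace ℝ (Fin N)) 1) :
    laplacian (fun z => (‖z - y‖ ^ N)⁻¹ * (1 + (1 - ‖z‖ ^ 2) / (‖y‖ ^ 2 - 1))) x = 0 := by
  have hx1 : ‖x‖ < 1 := by simpa using hx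
  have hc : ‖y‖^2 - 1 ≠ 0 := by nlinarith
  have hxy : x - y ≠ 0 := sub_ne_zero.mpr (by intro h; rw [h] at hx1; linarith)
  have ha : (0:ℝ) < ‖x - y‖^2 := pow_pos (norm_pos_iff.mpr hxy) 2
  have key : ∀ i : Fin N,
      iteratedDeriv 2 (fun t : ℝ =>
        (‖(x + t • EuclideanSpace.single i (1:ℝ)) - y‖ ^ N)⁻¹ *
        (1 + (1 - ‖x + t • EuclideanSpace.single i (1:ℝ)‖ ^ 2) / (‖y‖ ^ 2 - 1))) 0
      = ((-(N:ℝ)/2)*((-(N:ℝ)/2)-1) * (‖x-y‖^2) ^ ((-(N:ℝ)/2)-2) * (2*((x-y) i))^2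
          + 2*(-(N:ℝ)/2) * (‖x-y‖^2) ^ ((-(N:ℝ)/2)-1)) * ((1 + 1/(‖y‖^2 - 1)) + (-(1/(‖y‖^2 - 1)))*(‖x‖^2))
        + 2 * ((-(N:ℝ)/2) * (‖x-y‖^2) ^ ((-(N:ℝ)/2)-1) * (2*((x-y) i))) * ((-(1/(‖y‖^2 - 1)))*(2*(x i)))
        + (‖x-y‖^2) ^ (-(N:ℝ)/2) * (2*(-(1/(‖y‖^2 - 1)))) := by
    intro i
    rw [fun_eq N y hy x hx i]
    exact second_deriv_model _ _ _ _ _ _ _ ha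
  have hlap : laplacian (fun z => (‖z - y‖ ^ N)⁻¹ * (1 + (1 - ‖z‖ ^ 2) / (‖y‖ ^ 2 - 1))) x
      = ∑ i : Fin N,
        (((-(N:ℝ)/2)*((-(N:ℝ)/2)-1) * (‖x-y‖^2) ^ ((-(N:ℝ)/2)-2) * (2*((x-y) i))^2
          + 2*(-(N:ℝ)/2) * (‖x-y‖^2) ^ ((-(N:ℝ)/2)-1)) * ((1 + 1/(‖y‖^2 - 1)) + (-(1/(‖y‖^2 - 1)))*(‖x‖^2))
        + 2 * ((-(N:ℝ)/2) * (‖x-y‖^2) ^ ((-(N:ℝ)/2)-1) * (2*((x-y) i))) * ((-(1/(‖y‖^2 - 1)))*(2*(x i)))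
        + (‖x-y‖^2) ^ (-(N:ℝ)/2) * (2*(-(1/(‖y‖^2 - 1))))) := by
    unfold laplacian
    exact Finset.sum_congr rfl fun i _ => key i
  rw [hlap]
  -- abbreviations
  set n : ℝ := (N:ℝ) with hn
  set a : ℝ := ‖x-y‖^2 with haa
  set X : ℝ := ‖x‖^2 with hX
  set Y : ℝ := ‖y‖^2 with hY
  set P : ℝ := (inner ℝ x y : ℝ) with hP
  have hS1 : ∑ i : Fin N, ((x-y) i)^2 = a := by
    rw [haa, ← real_inner_self_eq_norm_sq]
    simp only [PiLp.inner_apply, RCLike.inner_apply, conj_trivial, sq]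
  have hS2 : ∑ i : Fin N, ((x-y) i) * (x i) = X - P := by
    have h1 : (inner ℝ (x-y) x : ℝ) = ‖x‖^2 - (inner ℝ x y : ℝ) := by
      rw [inner_sub_left, real_inner_self_eq_norm_sq, real_inner_comm y x]
    rw [hX, hP, ← h1]; simp only [PiLp.inner_apply, RCLike.inner_apply, conj_trivial]; exact Finset.sum_congr rfl fun i _ => mul_comm _ _
  have hA : a = X - 2*P + Y := by
    rw [haa, hX, hY, hP, norm_sub_sq_real]
    try ring
  have e1 : a ^ ((-n/2)-1) = a ^ ((-n/2)-2) * a := by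
    rw [show (-n/2)-1 = ((-n/2)-2)+1 from by ring, Real.rpow_add ha, Real.rpow_one]
  have e2 : a ^ (-n/2) = a ^ ((-n/2)-2) * a^2 := by
    rw [← Real.rpow_natCast a 2, ← Real.rpow_add ha]
    congr 1
    push_cast
    ring
  have step1 : (∑ i : Fin N,
        ((-n/2*(-n/2-1) * a ^ (-n/2-2) * (2*((x-y) i))^2 + 2*(-n/2) * a ^ (-n/2-1)) *
            (1 + 1/(Y - 1) + -(1/(Y - 1))*X)
          + 2 * (-n/2 * a ^ (-n/2-1) * (2*((x-y) i))) * (-(1/(Y - 1)) * (2*(x i)))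
          + a ^ (-n/2) * (2 * -(1/(Y - 1)))))
      = ∑ i : Fin N,
        ((4*(-n/2)*(-n/2-1) * a ^ (-n/2-2) * (1 + 1/(Y - 1) + -(1/(Y - 1))*X)) * ((x-y) i)^2
          + (8*(-n/2) * a ^ (-n/2-1) * (-(1/(Y - 1)))) * (((x-y) i) * (x i))
          + (2*(-n/2) * a ^ (-n/2-1) * (1 + 1/(Y - 1) + -(1/(Y - 1))*X) + a ^ (-n/2) * (2 * -(1/(Y - 1))))) :=
    Finset.sum_congr rfl fun i _ => by ring
  rw [step1, Finset.sum_add_distrib, Finset.sum_add_distrib, ← Finset.mul_sum, ← Finset.mul_sum,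
    Finset.sum_const, Finset.card_univ, Fintype.card_fin, nsmul_eq_mul, hS1, hS2, e1, e2, hA]
  have hY1 : Y - 1 ≠ 0 := hc
  field_simp
  ring
end

section
/- Let $N \in \mathbb{N}$, $s > 0$, $z \in \partial B$ (i.e., $|z| = 1$), and $x \in B$ with $x \neq z$. Define the Green function $G_s(x,y) = k_{N,s}|x-y|^{2s-N}\int_0^{\rho(x,y)} \frac{t^{s-1}}{(t+1)^{N/2}}\,dt$ with $\rho(x,y) = (1-|x|^2)(1-|y|^2)|x-y|^{-2}$ and $k_{N,s} > 0$ a constant. Then $\lim_{B \ni y \to z} \frac{G_s(x,y)}{(1-|y|^2)^s} = \frac{k_{N,s}}{s} \cdot \frac{(1-|x|^2)^s}{|x-z|^N}$. -/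
open Real Metric Filter MeasureTheory Set intervalIntegral

/-- The ratio `(∫₀^ρ t^{s-1}/(t+1)^c dt)/ρ^s` tends to `1/s` as `ρ → 0⁺`. -/
lemma key_ratio (s : ℝ) (hs : 0 < s) (c : ℝ) (hc : 0 ≤ c) :
    Tendsto (fun ρ : ℝ => (∫ t in (0:ℝ)..ρ, t ^ (s - 1) / (t + 1) ^ c) / ρ ^ s)
      (nhdsWithin 0 (Set.Ioi 0)) (nhds (1 / s)) := by
  have hbound : ∀ ρ : ℝ, ρ ∈ Set.Ioi (0:ℝ) →
      (1 + ρ) ^ (-c) / s ≤ (∫ t in (0:ℝ)..ρ, t ^ (s-1) / (t+1) ^ c) / ρ ^ s ∧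
      (∫ t in (0:ℝ)..ρ, t ^ (s-1) / (t+1) ^ c) / ρ ^ s ≤ 1 / s := by
    intro ρ hρ
    rw [Set.mem_Ioi] at hρ
    have hρs : (0:ℝ) < ρ ^ s := rpow_pos_of_pos hρ s
    have h1 : IntervalIntegrable (fun t : ℝ => t ^ (s-1)) volume 0 ρ :=
      intervalIntegrable_rpow' (by linarith)
    have hco : ContinuousOn (fun t : ℝ => t ^ (s-1) / (t+1) ^ c) (Set.Ioc 0 ρ) := by
      apply ContinuousOn.div
      · exact continuousOn_id.rpow_const fun t ht => Or.inl (ne_of_gt ht.1)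
      · exact (continuousOn_id.add continuousOn_const).rpow_const
          fun t ht => Or.inl (by have := ht.1; intro h; simp only [Pi.add_apply, id] at h; linarith)
      · intro t ht
        exact ne_of_gt (rpow_pos_of_pos (by linarith [ht.1]) _)
    have hasm : AEStronglyMeasurable (fun t : ℝ => t ^ (s-1) / (t+1) ^ c)
        (volume.restrict (Set.uIoc (0:ℝ) ρ)) := by
      rw [Set.uIoc_of_le hρ.le]
      exact hco.aestronglyMeasurable measurableSet_Ioc
    have hIf : IntervalIntegrable (fun t : ℝ => t ^ (s-1) / (t+1) ^ c) volume 0 ρ := by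
      apply h1.mono_fun hasm
      rw [Set.uIoc_of_le hρ.le]
      filter_upwards [ae_restrict_mem measurableSet_Ioc] with t ht
      have ht0 : (0:ℝ) ≤ t := ht.1.le
      have h1t : (1:ℝ) ≤ (t + 1) ^ c := one_le_rpow (by linarith) hc
      have htn : (0:ℝ) ≤ t ^ (s-1) := rpow_nonneg ht0 _
      rw [Real.norm_eq_abs, Real.norm_eq_abs, abs_of_nonneg htn,
        abs_of_nonneg (div_nonneg htn (by linarith))]
      exact div_le_self htn h1t
    have hint : (∫ t in (0:ℝ)..ρ, t ^ (s-1)) = ρ ^ s / s := by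
      rw [integral_rpow (Or.inl (by linarith))]
      have : s - 1 + 1 = s := by ring
      rw [this, zero_rpow hs.ne']
      ring
    have hupper : (∫ t in (0:ℝ)..ρ, t ^ (s-1) / (t+1) ^ c) ≤ ρ ^ s / s := by
      rw [← hint]
      apply integral_mono_on hρ.le hIf h1
      intro t ht
      have htn : (0:ℝ) ≤ t ^ (s-1) := rpow_nonneg ht.1 _
      exact div_le_self htn (one_le_rpow (by linarith [ht.1]) hc)
    have hlower : (1 + ρ) ^ (-c) * (ρ ^ s / s) ≤
        (∫ t in (0:ℝ)..ρ, t ^ (s-1) / (t+1) ^ c) := by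
      rw [← hint, ← intervalIntegral.integral_const_mul]
      apply integral_mono_on hρ.le (h1.const_mul _) hIf
      intro t ht
      have htn : (0:ℝ) ≤ t ^ (s-1) := rpow_nonneg ht.1 _
      have hpos : (0:ℝ) < (t + 1) ^ c := rpow_pos_of_pos (by linarith [ht.1]) _
      have hle : (t + 1) ^ c ≤ (1 + ρ) ^ c :=
        rpow_le_rpow (by linarith [ht.1]) (by linarith [ht.2]) hc
      rw [rpow_neg (by linarith), inv_mul_eq_div]
      exact div_le_div_of_nonneg_left htn hpos hle
    constructor
    · calc (1 + ρ) ^ (-c) / s = (1 + ρ) ^ (-c) * (ρ ^ s / s) / ρ ^ s := by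
            field_simp
        _ ≤ _ := by gcongr
    · calc _ ≤ (ρ ^ s / s) / ρ ^ s := by gcongr
        _ = 1 / s := by
            rw [div_div, div_eq_div_iff (by positivity) (by positivity)]
            ring
  have hg : Tendsto (fun ρ : ℝ => (1 + ρ) ^ (-c) / s) (nhdsWithin 0 (Set.Ioi 0))
      (nhds (1 / s)) := by
    have hca : ContinuousAt (fun ρ : ℝ => (1 + ρ) ^ (-c) / s) 0 := by
      apply ContinuousAt.div_const
      exact ((continuousAt_const.add continuousAt_id).rpow_const
        (Or.inl (by norm_num)))
    have := hca.tendsto.mono_left (nhdsWithin_le_nhds (s := Set.Ioi (0:ℝ)))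
    simpa using this
  refine tendsto_of_tendsto_of_tendsto_of_le_of_le' hg tendsto_const_nhds ?_ ?_
  · filter_upwards [self_mem_nhdsWithin] with ρ hρ using (hbound ρ hρ).1
  · filter_upwards [self_mem_nhdsWithin] with ρ hρ using (hbound ρ hρ).2

/-- The Martin kernel limit: for the Boggio Green function `G_s`,
`lim_{B ∋ y → z} G_s(x,y)/(1-|y|²)^s = (k_{N,s}/s) (1-|x|²)^s/|x-z|^N`
for `x ∈ B` and `z ∈ ∂B`. -/
theorem martin_kernel_limit (N : ℕ) (hN : 1 ≤ N) (s : ℝ) (hs : 0 < s) (kNs : ℝ)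
    (hk : 0 < kNs) (z : EuclideanSpace ℝ (Fin N)) (hz : ‖z‖ = 1)
    (x : EuclideanSpace ℝ (Fin N)) (hx : x ∈ ball (0 : EuclideanSpace ℝ (Fin N)) 1)
    (hxz : x ≠ z)
    (G : EuclideanSpace ℝ (Fin N) → EuclideanSpace ℝ (Fin N) → ℝ)
    (hG : ∀ a b : EuclideanSpace ℝ (Fin N), a ≠ b →
      G a b = kNs * ‖a - b‖ ^ (2 * s - N) *
        ∫ t in (0 : ℝ)..((1 - ‖a‖ ^ 2) * (1 - ‖b‖ ^ 2) / ‖a - b‖ ^ 2),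
          t ^ (s - 1) / (t + 1) ^ ((N : ℝ) / 2)) :
    Tendsto (fun y => G x y / (1 - ‖y‖ ^ 2) ^ s)
      (nhdsWithin z (ball (0 : EuclideanSpace ℝ (Fin N)) 1))
      (nhds (kNs / s * ((1 - ‖x‖ ^ 2) ^ s / ‖x - z‖ ^ N))) := by
  set l := nhdsWithin z (ball (0 : EuclideanSpace ℝ (Fin N)) 1) with hl
  have hx1 : ‖x‖ < 1 := by simpa using mem_ball_zero_iff.mp hx
  have hp : 0 < 1 - ‖x‖ ^ 2 := by nlinarith [norm_nonneg x]
  have hd : 0 < ‖x - z‖ := by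
    rw [norm_pos_iff]
    exact sub_ne_zero.mpr hxz
  -- notation
  set ρf : EuclideanSpace ℝ (Fin N) → ℝ :=
    fun y => (1 - ‖x‖ ^ 2) * (1 - ‖y‖ ^ 2) / ‖x - y‖ ^ 2 with hρf
  set F : ℝ → ℝ := fun r => ∫ t in (0:ℝ)..r, t ^ (s - 1) / (t + 1) ^ ((N : ℝ) / 2)
    with hF
  have hny : Tendsto (fun y : EuclideanSpace ℝ (Fin N) => ‖x - y‖) l (nhds ‖x - z‖) :=
    ((continuous_const.sub continuous_id).norm.tendsto z).mono_left nhdsWithin_le_nhds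
  have hq : Tendsto (fun y : EuclideanSpace ℝ (Fin N) => 1 - ‖y‖ ^ 2) l (nhds 0) := by
    have hc : Continuous (fun y : EuclideanSpace ℝ (Fin N) => 1 - ‖y‖ ^ 2) :=
      continuous_const.sub (continuous_norm.pow 2)
    have h := hc.continuousWithinAt
      (s := ball (0 : EuclideanSpace ℝ (Fin N)) 1) (x := z)
    simpa [hz, ContinuousWithinAt] using h
  have hρ0 : Tendsto ρf l (nhds 0) := by
    have h2 : Tendsto (fun y : EuclideanSpace ℝ (Fin N) => ‖x - y‖ ^ 2) l
        (nhds (‖x - z‖ ^ 2)) := hny.pow 2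
    have := ((tendsto_const_nhds (x := (1 - ‖x‖ ^ 2)) (f := l)).mul hq).div h2
      (pow_ne_zero 2 hd.ne')
    simp only [mul_zero, zero_div] at this
    exact this
  have hev1 : ∀ᶠ y in l, y ∈ ball (0 : EuclideanSpace ℝ (Fin N)) 1 :=
    eventually_mem_nhdsWithin
  have hev2 : ∀ᶠ y in l, 0 < ‖x - y‖ := hny.eventually (eventually_gt_nhds hd)
  have hρ : Tendsto ρf l (nhdsWithin 0 (Set.Ioi 0)) := by
    rw [tendsto_nhdsWithin_iff]
    refine ⟨hρ0, ?_⟩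
    filter_upwards [hev1, hev2] with y hy1 hy2
    have hqy : 0 < 1 - ‖y‖ ^ 2 := by
      have : ‖y‖ < 1 := by simpa using mem_ball_zero_iff.mp hy1
      nlinarith [norm_nonneg y]
    exact Set.mem_Ioi.mpr (by positivity)
  have hQ : Tendsto (fun y => F (ρf y) / (ρf y) ^ s) l (nhds (1 / s)) :=
    (key_ratio s hs ((N : ℝ) / 2) (by positivity)).comp hρ
  have hpow : Tendsto (fun y : EuclideanSpace ℝ (Fin N) => ‖x - y‖ ^ (-(N:ℝ))) l
      (nhds (‖x - z‖ ^ (-(N:ℝ)))) :=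
    ((Real.continuousAt_rpow_const _ _ (Or.inl hd.ne')).tendsto).comp hny
  have hmain : Tendsto
      (fun y => kNs * (1 - ‖x‖ ^ 2) ^ s * ‖x - y‖ ^ (-(N:ℝ)) * (F (ρf y) / (ρf y) ^ s))
      l (nhds (kNs * (1 - ‖x‖ ^ 2) ^ s * ‖x - z‖ ^ (-(N:ℝ)) * (1 / s))) :=
    (tendsto_const_nhds.mul hpow).mul hQ
  have hval : kNs * (1 - ‖x‖ ^ 2) ^ s * ‖x - z‖ ^ (-(N:ℝ)) * (1 / s)
      = kNs / s * ((1 - ‖x‖ ^ 2) ^ s / ‖x - z‖ ^ N) := by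
    rw [rpow_neg hd.le, rpow_natCast]
    field_simp
  rw [← hval]
  apply hmain.congr'
  filter_upwards [hev1, hev2] with y hy1 hy2
  have hqy : 0 < 1 - ‖y‖ ^ 2 := by
    have : ‖y‖ < 1 := by simpa using mem_ball_zero_iff.mp hy1
    nlinarith [norm_nonneg y]
  have hxyne : x ≠ y := by
    intro h
    rw [h, sub_self, norm_zero] at hy2
    exact lt_irrefl 0 hy2
  rw [hG x y hxyne]
  have ha : (0:ℝ) < ‖x - y‖ := hy2
  have hρs : (ρf y) ^ s
      = (1 - ‖x‖ ^ 2) ^ s * (1 - ‖y‖ ^ 2) ^ s / ‖x - y‖ ^ (2 * s) := by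
    rw [hρf]
    rw [div_rpow (by positivity) (by positivity), mul_rpow hp.le hqy.le]
    congr 1
    rw [← rpow_natCast (‖x - y‖) 2, ← rpow_mul (norm_nonneg _)]
    norm_num
  have hps : (0:ℝ) < (1 - ‖x‖ ^ 2) ^ s := rpow_pos_of_pos hp s
  have hqs : (0:ℝ) < (1 - ‖y‖ ^ 2) ^ s := rpow_pos_of_pos hqy s
  have has : (0:ℝ) < ‖x - y‖ ^ (2 * s) := rpow_pos_of_pos ha _
  have hasN : (0:ℝ) < ‖x - y‖ ^ ((N:ℝ)) := rpow_pos_of_pos ha _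
  rw [hρs, rpow_sub ha, rpow_neg ha.le]
  field_simp
  ring
end

section
/- Let $N \in \mathbb{N}$, $\sigma \in (0,1)$, $m \in \mathbb{N}_0$, $s = m + \sigma$, $t > 2$, and let $K(a,b) := \int_B \Gamma_B(R_t a, R_t z)\, \Gamma_B(z, b)\, dz$ for $a, b \in B^t := B_1(te_1)$, where $\Gamma_B(x,y) = (-1)^m\gamma_{N,\sigma}|x-y|^{-N}(1-|x|^2)^s(|y|^2-1)^{-s}$ is the Poisson kernel and $R_t$ is reflection across $\{2x_1 = t\}$. Then for all $a, b \in B^t$: $|K(a,b)| \leq \left(\frac{|a|^2-1}{|b|^2-1}\right)^s \frac{|B|\,\gamma_{N,\sigma}^2}{(t-2)^{2N}}$. -/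
lemma poisson_aux_alg (g u P Q S : ℝ) (hQ : Q ≠ 0) (_hu : u ≠ 0) :
    (g * u⁻¹ * (P / Q)) * (g * u⁻¹ * (Q / S)) = P / S * (g ^ 2 / (u * u)) := by
  have h : P / Q * (Q / S) = P / S := by
    rw [div_mul_div_comm, mul_comm Q S, mul_div_mul_right _ _ hQ]
  calc (g * u⁻¹ * (P / Q)) * (g * u⁻¹ * (Q / S))
      = (g * u⁻¹) * (g * u⁻¹) * (P / Q * (Q / S)) := by ring
    _ = (g * u⁻¹) * (g * u⁻¹) * (P / S) := by rw [h]
    _ = P / S * (g ^ 2 / (u * u)) := by rw [div_eq_mul_inv (g ^ 2), mul_inv]; ring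


open Real Metric MeasureTheory

/-- Estimate for the iterated Poisson kernel
`K(a,b) = ∫_B Γ_B(R_t a, R_t z) Γ_B(z,b) dz` on the translated ball `B¹ = B₁(t e₁)`:
`|K(a,b)| ≤ ((|a|²-1)/(|b|²-1))^s |B| γ²/(t-2)^{2N}`. -/
theorem poisson_kernel_iterate_estimate (N : ℕ) (hN : 0 < N) (m : ℕ)
    (σ : ℝ) (hσ : σ ∈ Set.Ioo (0 : ℝ) 1) (s : ℝ) (hs : s = m + σ)
    (γ : ℝ)
    (hγ : γ = 2 / (Real.Gamma σ * Real.Gamma (1 - σ) *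
      (2 * π ^ ((N : ℝ) / 2) / Real.Gamma ((N : ℝ) / 2))))
    (t : ℝ) (ht : 2 < t)
    (Γb : EuclideanSpace ℝ (Fin N) → EuclideanSpace ℝ (Fin N) → ℝ)
    (hΓ : ∀ a b : EuclideanSpace ℝ (Fin N),
      Γb a b = (-1 : ℝ) ^ m * γ * ‖a - b‖ ^ (-(N : ℝ)) *
        ((1 - ‖a‖ ^ 2) ^ s / (‖b‖ ^ 2 - 1) ^ s))
    (R : EuclideanSpace ℝ (Fin N) → EuclideanSpace ℝ (Fin N))
    (hR : ∀ x, R x = fun i : Fin N => if (i : ℕ) = 0 then t - x i else x i)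
    (a b : EuclideanSpace ℝ (Fin N))
    (ha : a ∈ ball (t • EuclideanSpace.single (⟨0, hN⟩ : Fin N) (1 : ℝ)) 1)
    (hb : b ∈ ball (t • EuclideanSpace.single (⟨0, hN⟩ : Fin N) (1 : ℝ)) 1) :
    |∫ z in ball (0 : EuclideanSpace ℝ (Fin N)) 1, Γb (R a) (R z) * Γb z b| ≤
      ((‖a‖ ^ 2 - 1) / (‖b‖ ^ 2 - 1)) ^ s *
        ((volume (ball (0 : EuclideanSpace ℝ (Fin N)) 1)).toReal * γ ^ 2 /
          (t - 2) ^ (2 * N)) := by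
  obtain ⟨hσ0, hσ1⟩ := hσ
  set i0 : Fin N := ⟨0, hN⟩ with hi0
  set c : EuclideanSpace ℝ (Fin N) := t • EuclideanSpace.single i0 (1 : ℝ) with hc
  have ht0 : (0 : ℝ) < t := by linarith
  have ht2 : (0 : ℝ) < t - 2 := by linarith
  have hγpos : 0 < γ := by
    rw [hγ]
    have h1 : 0 < Real.Gamma σ := Real.Gamma_pos_of_pos hσ0
    have h2 : 0 < Real.Gamma (1 - σ) := Real.Gamma_pos_of_pos (by linarith)
    have h3 : 0 < Real.Gamma ((N : ℝ) / 2) := Real.Gamma_pos_of_pos (by positivity)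
    have h4 : (0 : ℝ) < π ^ ((N : ℝ) / 2) := Real.rpow_pos_of_pos Real.pi_pos _
    positivity
  have hs0 : (0 : ℝ) ≤ s := by rw [hs]; positivity
  -- norm squared formula
  have hnorm_sq : ∀ x : EuclideanSpace ℝ (Fin N), ‖x‖ ^ 2 = ∑ i, x i ^ 2 := by
    intro x
    rw [EuclideanSpace.norm_eq, Real.sq_sqrt (by positivity)]
    simp [Real.norm_eq_abs, sq_abs]
  -- key: squared norm of the reflection
  have hkey : ∀ x : EuclideanSpace ℝ (Fin N),
      ‖R x‖ ^ 2 = ‖x‖ ^ 2 - x i0 ^ 2 + (t - x i0) ^ 2 := by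
    intro x
    rw [hnorm_sq, hnorm_sq]
    have h : ∀ i : Fin N, (R x) i ^ 2
        = x i ^ 2 + (if i = i0 then (t - x i0) ^ 2 - x i0 ^ 2 else 0) := by
      intro i
      rw [hR]
      rcases eq_or_ne i i0 with h | h
      · subst h; simp [hi0]
      · have : (i : ℕ) ≠ 0 := by simpa [hi0, Fin.ext_iff] using h
        simp [this, h]
    simp_rw [h, Finset.sum_add_distrib, Finset.sum_ite_eq' Finset.univ i0]
    simp
    ring
  -- coordinate bound
  have hcoord : ∀ x : EuclideanSpace ℝ (Fin N), x i0 ^ 2 ≤ ‖x‖ ^ 2 := by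
    intro x
    rw [hnorm_sq]
    exact Finset.single_le_sum (f := fun i => x i ^ 2)
      (fun i _ => sq_nonneg _) (Finset.mem_univ i0)
  -- the reflection inequality
  have hRefl : ∀ x : EuclideanSpace ℝ (Fin N), 1 - ‖x‖ ^ 2 ≤ ‖R x‖ ^ 2 - 1 := by
    intro x
    have h1 := hkey x
    have h2 := hcoord x
    nlinarith [sq_nonneg (2 * x i0 - t)]
  -- R is an involution
  have hRR : ∀ x : EuclideanSpace ℝ (Fin N), R (R x) = x := by
    intro x
    ext i
    rw [hR, hR]
    rcases eq_or_ne (i : ℕ) 0 with h | h <;> simp [h]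
  -- ‖R x‖ = dist x c
  have hRc : ∀ x : EuclideanSpace ℝ (Fin N), ‖R x‖ = ‖x - c‖ := by
    intro x
    rw [EuclideanSpace.norm_eq, EuclideanSpace.norm_eq]
    congr 1
    apply Finset.sum_congr rfl
    intro i _
    have hxc : (x - c) i = x i - t * (if i = i0 then (1 : ℝ) else 0) := by
      simp [hc, EuclideanSpace.single_apply]
    rw [hR, hxc]
    rcases eq_or_ne i i0 with h | h
    · subst h
      simp [hi0, Real.norm_eq_abs, sq_abs]
      rw [← sq_abs (t - x i0), ← sq_abs (x i0 - t)]
      congr 1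
      rw [abs_sub_comm]
    · have h' : (i : ℕ) ≠ 0 := by simpa [hi0, Fin.ext_iff] using h
      simp [h, h']
  -- reflection preserves distances
  have hRd : ∀ x y : EuclideanSpace ℝ (Fin N), ‖R x - R y‖ = ‖x - y‖ := by
    intro x y
    rw [EuclideanSpace.norm_eq, EuclideanSpace.norm_eq]
    congr 1
    apply Finset.sum_congr rfl
    intro i _
    have h1 : (R x - R y) i = (R x) i - (R y) i := rfl
    have h2 : (x - y) i = x i - y i := rfl
    rw [h1, h2, hR, hR]
    rcases eq_or_ne (i : ℕ) 0 with h | h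
    · simp only [h, if_pos, Real.norm_eq_abs]
      rw [sq_abs, sq_abs]
      ring
    · simp [h]
  -- basic facts about a and b
  have haRa : ‖R a‖ < 1 := by rw [hRc]; simpa [dist_eq_norm] using ha
  have hbRb : ‖R b‖ < 1 := by rw [hRc]; simpa [dist_eq_norm] using hb
  have ha2 : 1 - ‖R a‖ ^ 2 ≤ ‖a‖ ^ 2 - 1 := by
    have := hRefl (R a); rwa [hRR] at this
  have hb2 : 1 - ‖R b‖ ^ 2 ≤ ‖b‖ ^ 2 - 1 := by
    have := hRefl (R b); rwa [hRR] at this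
  have hRa0 : 0 < 1 - ‖R a‖ ^ 2 := by nlinarith [norm_nonneg (R a)]
  have hRb0 : 0 < 1 - ‖R b‖ ^ 2 := by nlinarith [norm_nonneg (R b)]
  have ha1 : 0 < ‖a‖ ^ 2 - 1 := lt_of_lt_of_le hRa0 ha2
  have hb1 : 0 < ‖b‖ ^ 2 - 1 := lt_of_lt_of_le hRb0 hb2
  have hnc : ‖c‖ = t := by
    rw [hc, norm_smul, EuclideanSpace.norm_single]
    simp [abs_of_pos ht0]
  have hna : t - 1 ≤ ‖a‖ := by
    have h1 : ‖a - c‖ < 1 := by simpa [dist_eq_norm] using ha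
    have h2 := abs_norm_sub_norm_le a c
    rw [hnc] at h2
    cases abs_le.1 h2 with
    | intro hl hr => linarith
  have hnb : t - 1 ≤ ‖b‖ := by
    have h1 : ‖b - c‖ < 1 := by simpa [dist_eq_norm] using hb
    have h2 := abs_norm_sub_norm_le b c
    rw [hnc] at h2
    cases abs_le.1 h2 with
    | intro hl hr => linarith
  -- the constant
  set C : ℝ := (‖a‖ ^ 2 - 1) ^ s / (‖b‖ ^ 2 - 1) ^ s * (γ ^ 2 / (t - 2) ^ (2 * N))
    with hC
  -- pointwise bound
  have hbound : ∀ z ∈ ball (0 : EuclideanSpace ℝ (Fin N)) 1,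
      ‖Γb (R a) (R z) * Γb z b‖ ≤ C := by
    intro z hz
    have hz1 : ‖z‖ < 1 := by simpa using hz
    have hz2 : 0 < 1 - ‖z‖ ^ 2 := by nlinarith [norm_nonneg z]
    have hz3 : 0 < ‖R z‖ ^ 2 - 1 := lt_of_lt_of_le hz2 (hRefl z)
    have hdaz : t - 2 ≤ ‖R a - R z‖ := by
      rw [hRd]
      have := norm_sub_norm_le a z
      linarith
    have hdzb : t - 2 ≤ ‖z - b‖ := by
      have h1 := norm_sub_norm_le b z
      have h2 : ‖z - b‖ = ‖b - z‖ := norm_sub_rev z b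
      linarith
    rw [hΓ, hΓ]
    have h1 : ((-1 : ℝ) ^ m) * ((-1 : ℝ) ^ m) = 1 := by
      rw [← mul_pow]; norm_num
    set T : ℝ := (γ * ‖R a - R z‖ ^ (-(N : ℝ)) *
        ((1 - ‖R a‖ ^ 2) ^ s / (‖R z‖ ^ 2 - 1) ^ s)) *
      (γ * ‖z - b‖ ^ (-(N : ℝ)) * ((1 - ‖z‖ ^ 2) ^ s / (‖b‖ ^ 2 - 1) ^ s)) with hT
    have heq : ((-1 : ℝ) ^ m * γ * ‖R a - R z‖ ^ (-(N : ℝ)) *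
          ((1 - ‖R a‖ ^ 2) ^ s / (‖R z‖ ^ 2 - 1) ^ s)) *
        ((-1 : ℝ) ^ m * γ * ‖z - b‖ ^ (-(N : ℝ)) *
          ((1 - ‖z‖ ^ 2) ^ s / (‖b‖ ^ 2 - 1) ^ s)) = T := by
      rw [hT]
      calc ((-1 : ℝ) ^ m * γ * ‖R a - R z‖ ^ (-(N : ℝ)) *
          ((1 - ‖R a‖ ^ 2) ^ s / (‖R z‖ ^ 2 - 1) ^ s)) *
        ((-1 : ℝ) ^ m * γ * ‖z - b‖ ^ (-(N : ℝ)) *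
          ((1 - ‖z‖ ^ 2) ^ s / (‖b‖ ^ 2 - 1) ^ s))
          = (((-1 : ℝ) ^ m) * ((-1 : ℝ) ^ m)) *
            ((γ * ‖R a - R z‖ ^ (-(N : ℝ)) *
              ((1 - ‖R a‖ ^ 2) ^ s / (‖R z‖ ^ 2 - 1) ^ s)) *
            (γ * ‖z - b‖ ^ (-(N : ℝ)) *
              ((1 - ‖z‖ ^ 2) ^ s / (‖b‖ ^ 2 - 1) ^ s))) := by ring
        _ = _ := by rw [h1, one_mul]
    rw [heq, Real.norm_eq_abs]
    have hTnn : 0 ≤ T := by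
      rw [hT]
      exact mul_nonneg
        (mul_nonneg (mul_nonneg hγpos.le
            (Real.rpow_nonneg (norm_nonneg (R a - R z)) (-(N : ℝ))))
          (div_nonneg (Real.rpow_nonneg hRa0.le s) (Real.rpow_nonneg hz3.le s)))
        (mul_nonneg (mul_nonneg hγpos.le
            (Real.rpow_nonneg (norm_nonneg (z - b)) (-(N : ℝ))))
          (div_nonneg (Real.rpow_nonneg hz2.le s) (Real.rpow_nonneg hb1.le s)))
    rw [abs_of_nonneg hTnn]
    -- now bound T
    have hA1 : ‖R a - R z‖ ^ (-(N : ℝ)) ≤ (t - 2) ^ (-(N : ℝ)) :=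
      Real.rpow_le_rpow_of_nonpos ht2 hdaz (by simp)
    have hA2 : ‖z - b‖ ^ (-(N : ℝ)) ≤ (t - 2) ^ (-(N : ℝ)) :=
      Real.rpow_le_rpow_of_nonpos ht2 hdzb (by simp)
    have hP1 : (1 - ‖R a‖ ^ 2) ^ s ≤ (‖a‖ ^ 2 - 1) ^ s :=
      Real.rpow_le_rpow hRa0.le ha2 hs0
    have hP2 : (1 - ‖z‖ ^ 2) ^ s ≤ (‖R z‖ ^ 2 - 1) ^ s :=
      Real.rpow_le_rpow hz2.le (hRefl z) hs0
    have hQ1 : (0 : ℝ) < (‖R z‖ ^ 2 - 1) ^ s := Real.rpow_pos_of_pos hz3 s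
    have hQ2 : (0 : ℝ) < (‖b‖ ^ 2 - 1) ^ s := Real.rpow_pos_of_pos hb1 s
    have hupos : (0 : ℝ) ≤ (t - 2) ^ (-(N : ℝ)) := Real.rpow_nonneg ht2.le _
    have hF1 : γ * ‖R a - R z‖ ^ (-(N : ℝ)) *
          ((1 - ‖R a‖ ^ 2) ^ s / (‖R z‖ ^ 2 - 1) ^ s)
        ≤ γ * (t - 2) ^ (-(N : ℝ)) *
          ((‖a‖ ^ 2 - 1) ^ s / (‖R z‖ ^ 2 - 1) ^ s) :=
      mul_le_mul (mul_le_mul_of_nonneg_left hA1 hγpos.le)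
        (div_le_div₀ (Real.rpow_nonneg ha1.le s) hP1 hQ1 le_rfl)
        (div_nonneg (Real.rpow_nonneg hRa0.le s) hQ1.le)
        (mul_nonneg hγpos.le hupos)
    have hF2 : γ * ‖z - b‖ ^ (-(N : ℝ)) *
          ((1 - ‖z‖ ^ 2) ^ s / (‖b‖ ^ 2 - 1) ^ s)
        ≤ γ * (t - 2) ^ (-(N : ℝ)) *
          ((‖R z‖ ^ 2 - 1) ^ s / (‖b‖ ^ 2 - 1) ^ s) :=
      mul_le_mul (mul_le_mul_of_nonneg_left hA2 hγpos.le)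
        (div_le_div₀ hQ1.le hP2 hQ2 le_rfl)
        (div_nonneg (Real.rpow_nonneg hz2.le s) hQ2.le)
        (mul_nonneg hγpos.le hupos)
    have hstep : T ≤ (γ * (t - 2) ^ (-(N : ℝ)) *
        ((‖a‖ ^ 2 - 1) ^ s / (‖R z‖ ^ 2 - 1) ^ s)) *
      (γ * (t - 2) ^ (-(N : ℝ)) * ((‖R z‖ ^ 2 - 1) ^ s / (‖b‖ ^ 2 - 1) ^ s)) := by
      rw [hT]
      exact mul_le_mul hF1 hF2
        (mul_nonneg (mul_nonneg hγpos.le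
            (Real.rpow_nonneg (norm_nonneg (z - b)) (-(N : ℝ))))
          (div_nonneg (Real.rpow_nonneg hz2.le s) (Real.rpow_nonneg hb1.le s)))
        (mul_nonneg (mul_nonneg hγpos.le hupos)
          (div_nonneg (Real.rpow_nonneg ha1.le s) hQ1.le))
    refine le_trans hstep (le_of_eq ?_)
    have hrw : (t - 2) ^ (-(N : ℝ)) = ((t - 2) ^ N)⁻¹ := by
      rw [Real.rpow_neg ht2.le, Real.rpow_natCast]
    have h2N : (t - 2) ^ (2 * N) = ((t - 2) ^ N) * ((t - 2) ^ N) := by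
      rw [two_mul, pow_add]
    rw [hC, hrw, h2N]
    exact poisson_aux_alg γ ((t - 2) ^ N) _ _ _ hQ1.ne' (by positivity)
  -- assemble
  have hmain : ‖∫ z in ball (0 : EuclideanSpace ℝ (Fin N)) 1, Γb (R a) (R z) * Γb z b‖ ≤
      C * (volume (ball (0 : EuclideanSpace ℝ (Fin N)) 1)).toReal :=
    norm_setIntegral_le_of_norm_le_const measure_ball_lt_top hbound
  rw [Real.norm_eq_abs] at hmain
  refine le_trans hmain (le_of_eq ?_)
  rw [Real.div_rpow ha1.le hb1.le, hC]
  ring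
end
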